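/- (Theorem 1, closed-loop performance bound) Under Assumptions 1 and 2 with ρ > 0 and γ := C/(1−ρ) > 1, let V̄ > 0, M ≥ 1, N > N_M, and ε_{N,M} := 1 − C²ρ_γ^{N−N₀}ρ^M/(1−ρ^M) > 0. Then for every initial condition x₀ with V_{N,M}(x₀) ≤ V̄, the closed loop x(t+1) = f(x(t), u(t)) with u(t) = u*(0|t) (the first element of a minimizing input sequence for V_{N,M}(x(t))) satisfies Σ_{k=0}^{∞} ℓ(x(k), u(k)) ≤ V_{N,M}(x₀)/ε_{N,M}. -/

import Mathlib

open Finset Filter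
open scoped ENNReal

noncomputable section

open scoped Classical

/-- State/input spaces are Euclidean spaces. -/
abbrev Vec (n : ℕ) := EuclideanSpace ℝ (Fin n)

/-- Open-loop state trajectory: `x(0) = x`, `x(k+1) = f(x(k), u(k))`. -/
def traj {n m : ℕ} (f : Vec n → Vec m → Vec n) (x : Vec n) (u : ℕ → Vec m) : ℕ → Vec n
  | 0 => x
  | k + 1 => f (traj f x u k) (u k)

/-- Closed-loop state trajectory under the feedback `κ` (the map `φ_x(·, x)`). -/
def phiX {n m : ℕ} (f : Vec n → Vec m → Vec n) (κ : Vec n → Vec m) (x : Vec n) : ℕ → Vec n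
  | 0 => x
  | k + 1 => f (phiX f κ x k) (κ (phiX f κ x k))

/-- `ℓ_min(x) := inf_{u ∈ U} ℓ(x, u)`. -/
def lmin {n m : ℕ} (ℓ : Vec n → Vec m → ℝ) (Uset : Set (Vec m)) (x : Vec n) : ℝ :=
  sInf ((fun u => ℓ x u) '' Uset)

/-- Finite-tail cost `V_{f,M}(x)`: sum of the stage cost along the κ-closed loop if the
constraints are satisfied along the tail, and `+∞` otherwise (for `M = 0` it equals `0`). -/
def Vtail {n m : ℕ} (f : Vec n → Vec m → Vec n) (κ : Vec n → Vec m)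
    (ℓ : Vec n → Vec m → ℝ) (Z : Set (Vec n × Vec m)) (M : ℕ) (x : Vec n) : ℝ≥0∞ :=
  if ∀ k < M, (phiX f κ x k, κ (phiX f κ x k)) ∈ Z then
    ENNReal.ofReal (∑ k ∈ Finset.range M, ℓ (phiX f κ x k) (κ (phiX f κ x k)))
  else ⊤

/-- Feasibility of the input sequence `u` over horizon `N` from state `x`. -/
def Feasible {n m : ℕ} (f : Vec n → Vec m → Vec n) (Z : Set (Vec n × Vec m))
    (Uset : Set (Vec m)) (N : ℕ) (x : Vec n) (u : ℕ → Vec m) : Prop :=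
  ∀ k < N, u k ∈ Uset ∧ (traj f x u k, u k) ∈ Z

/-- MPC open-loop cost `J_{N,M}` of the input sequence `u` from state `x`. -/
def Jcost {n m : ℕ} (f : Vec n → Vec m → Vec n) (κ : Vec n → Vec m)
    (ℓ : Vec n → Vec m → ℝ) (Z : Set (Vec n × Vec m)) (N M : ℕ) (x : Vec n)
    (u : ℕ → Vec m) : ℝ≥0∞ :=
  ENNReal.ofReal (∑ k ∈ Finset.range N, ℓ (traj f x u k) (u k)) +
    Vtail f κ ℓ Z M (traj f x u N)

/-- MPC value function `V_{N,M}(x)` (equal to `+∞` if the problem is infeasible). -/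
def Vmpc {n m : ℕ} (f : Vec n → Vec m → Vec n) (κ : Vec n → Vec m)
    (ℓ : Vec n → Vec m → ℝ) (Z : Set (Vec n × Vec m)) (Uset : Set (Vec m))
    (N M : ℕ) (x : Vec n) : ℝ≥0∞ :=
  ⨅ (u : ℕ → Vec m) (_ : Feasible f Z Uset N x u), Jcost f κ ℓ Z N M x u

/-- `u` is a minimizing (optimal) input sequence for `V_{N,M}(x)`. -/
def IsMinimizer {n m : ℕ} (f : Vec n → Vec m → Vec n) (κ : Vec n → Vec m)
    (ℓ : Vec n → Vec m → ℝ) (Z : Set (Vec n × Vec m)) (Uset : Set (Vec m))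
    (N M : ℕ) (x : Vec n) (u : ℕ → Vec m) : Prop :=
  Feasible f Z Uset N x u ∧ Vmpc f κ ℓ Z Uset N M x = Jcost f κ ℓ Z N M x u

/-- Infinite-horizon optimal cost `V_{∞,0}(x)`. -/
def Vinf {n m : ℕ} (f : Vec n → Vec m → Vec n) (ℓ : Vec n → Vec m → ℝ)
    (Z : Set (Vec n × Vec m)) (Uset : Set (Vec m)) (x : Vec n) : ℝ≥0∞ :=
  ⨅ (u : ℕ → Vec m) (_ : ∀ k, u k ∈ Uset ∧ (traj f x u k, u k) ∈ Z),
    ∑' k : ℕ, ENNReal.ofReal (ℓ (traj f x u k) (u k))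

/-- Assumption 2 (locally stabilizing controller): exponential decay of the stage
cost along the κ-closed loop and constraint satisfaction, locally (`ℓ_min(x) ≤ ε`). -/
def Assumption2 {n m : ℕ} (f : Vec n → Vec m → Vec n) (κ : Vec n → Vec m)
    (ℓ : Vec n → Vec m → ℝ) (Z : Set (Vec n × Vec m)) (Uset : Set (Vec m))
    (ρ C ε : ℝ) : Prop :=
  ρ ∈ Set.Ico (0 : ℝ) 1 ∧ 1 ≤ C ∧ 0 < ε ∧
    ∀ x : Vec n, lmin ℓ Uset x ≤ ε → ∀ k : ℕ,
      ℓ (phiX f κ x k) (κ (phiX f κ x k)) ≤ C * ρ ^ k * lmin ℓ Uset x ∧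
      (phiX f κ x k, κ (phiX f κ x k)) ∈ Z

/-- A class-`K∞` function: continuous, strictly increasing and unbounded on `[0,∞)`
with `α(0) = 0`. -/
def IsKInfty (α : ℝ → ℝ) : Prop :=
  ContinuousOn α (Set.Ici 0) ∧ StrictMonoOn α (Set.Ici 0) ∧ α 0 = 0 ∧
    Tendsto α atTop atTop

section Helpers

variable {n m : ℕ} (f : Vec n → Vec m → Vec n) (κ : Vec n → Vec m)

lemma lmin_nonneg (ℓ : Vec n → Vec m → ℝ) (Uset : Set (Vec m))
    (hℓ0 : ∀ x u, 0 ≤ ℓ x u) (x : Vec n) : 0 ≤ lmin ℓ Uset x := by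
  apply Real.sInf_nonneg
  rintro y ⟨v, -, rfl⟩; exact hℓ0 _ _

lemma lmin_le (ℓ : Vec n → Vec m → ℝ) (Uset : Set (Vec m))
    (hℓ0 : ∀ x u, 0 ≤ ℓ x u) (x : Vec n) {u : Vec m} (hu : u ∈ Uset) :
    lmin ℓ Uset x ≤ ℓ x u := by
  refine csInf_le ⟨0, ?_⟩ (Set.mem_image_of_mem _ hu)
  rintro y ⟨v, -, rfl⟩; exact hℓ0 _ _

lemma phiX_add (x : Vec n) (k j : ℕ) :
    phiX f κ x (k + j) = phiX f κ (phiX f κ x k) j := by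
  induction j with
  | zero => rfl
  | succ j ih => rw [← Nat.add_assoc]; simp [phiX, ih]

lemma traj_congr (x : Vec n) {u v : ℕ → Vec m} {j : ℕ}
    (h : ∀ i < j, u i = v i) : traj f x u j = traj f x v j := by
  induction j with
  | zero => rfl
  | succ j ih =>
    simp only [traj]
    rw [ih (fun i hi => h i (hi.trans (Nat.lt_succ_self j))), h j (Nat.lt_succ_self j)]

lemma traj_shift (x : Vec n) (u : ℕ → Vec m) (j : ℕ) :
    traj f (f x (u 0)) (fun i => u (i + 1)) j = traj f x u (j + 1) := by
  induction j with
  | zero => rfl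
  | succ j ih => simp only [traj, ih]

/-- Splice: follow `u` for `k` steps, then the feedback `κ`. -/
def splice (x : Vec n) (u : ℕ → Vec m) (k : ℕ) : ℕ → Vec m :=
  fun j => if j < k then u j else κ (phiX f κ (traj f x u k) (j - k))

lemma traj_splice_le (x : Vec n) (u : ℕ → Vec m) {k j : ℕ} (hj : j ≤ k) :
    traj f x (splice f κ x u k) j = traj f x u j := by
  apply traj_congr
  intro i hi
  simp [splice, lt_of_lt_of_le hi hj]

lemma traj_splice_ge (x : Vec n) (u : ℕ → Vec m) (k i : ℕ) :
    traj f x (splice f κ x u k) (k + i) = phiX f κ (traj f x u k) i := by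
  induction i with
  | zero => exact traj_splice_le f κ x u le_rfl
  | succ i ih =>
    rw [← Nat.add_assoc]
    have hs : splice f κ x u k (k + i) = κ (phiX f κ (traj f x u k) i) := by
      simp [splice, Nat.add_sub_cancel_left]
    simp only [traj, phiX, ih, hs]

lemma splice_val_ge (x : Vec n) (u : ℕ → Vec m) {k j : ℕ} (hj : k ≤ j) :
    splice f κ x u k j = κ (phiX f κ (traj f x u k) (j - k)) := by
  simp [splice, Nat.not_lt.mpr hj]

end Helpers
set_option maxHeartbeats 2000000 in
lemma key_decrease {n m : ℕ}
    (f : Vec n → Vec m → Vec n) (κ : Vec n → Vec m) (ℓ : Vec n → Vec m → ℝ)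
    (Z : Set (Vec n × Vec m)) (Uset : Set (Vec m)) (ρ C ε : ℝ)
    (hℓ0 : ∀ x u, 0 ≤ ℓ x u) (hκU : ∀ x, κ x ∈ Uset)
    (hA2 : Assumption2 f κ ℓ Z Uset ρ C ε) (hρpos : 0 < ρ)
    (Vbar γ ργ γlow NM : ℝ) (hVbar : 0 < Vbar) (hγ : γ = C / (1 - ρ)) (hγ1 : 1 < γ)
    (hργ : ργ = (γ - 1) / γ) (hγlow : γlow = min γ (Vbar / ε))
    (N₀ : ℕ) (hN₀ : N₀ = ⌈max 0 ((Vbar - γ * ε) / ε)⌉₊)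
    (M : ℕ) (hM : 1 ≤ M)
    (hNM : NM = N₀ + max (Real.log γlow)
        (max (Real.log (C ^ 2 * ρ ^ M / (1 - ρ ^ M))) 0) /
        (Real.log γ - Real.log (γ - 1)))
    (N : ℕ) (hN : NM < N) (εNM : ℝ)
    (hεNM : εNM = 1 - C ^ 2 * ργ ^ (N - N₀) * ρ ^ M / (1 - ρ ^ M)) (hεpos : 0 < εNM)
    (x : Vec n) (u : ℕ → Vec m)
    (hfeas : Feasible f Z Uset N x u)
    (hmin : Vmpc f κ ℓ Z Uset N M x = Jcost f κ ℓ Z N M x u)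
    (hble : Vmpc f κ ℓ Z Uset N M x ≤ ENNReal.ofReal Vbar) :
    Vmpc f κ ℓ Z Uset N M (f x (u 0)) + ENNReal.ofReal (εNM * ℓ x (u 0)) ≤
      Vmpc f κ ℓ Z Uset N M x := by
  obtain ⟨hρI, hC1, hε, hA2'⟩ := hA2
  have hρ1 : ρ < 1 := hρI.2
  have h1ρ : 0 < 1 - ρ := by linarith
  have hγpos : 0 < γ := lt_trans one_pos hγ1
  have hγC : γ * (1 - ρ) = C := by rw [hγ]; field_simp
  have hCpos : 0 < C := by nlinarith
  have hργ0 : 0 ≤ ργ := by rw [hργ]; exact div_nonneg (by linarith) hγpos.le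
  have hργ1 : ργ < 1 := by rw [hργ]; rw [div_lt_one hγpos]; linarith
  have hρM1 : ρ ^ M < 1 := pow_lt_one₀ hρpos.le hρ1 (by omega)
  have hρM0 : 0 < 1 - ρ ^ M := by linarith
  have hγlowpos : 0 < γlow := by
    rw [hγlow]; exact lt_min hγpos (div_pos hVbar hε)
  have hγlowγ : γlow ≤ γ := hγlow ▸ min_le_left _ _
  have hD : 0 < Real.log γ - Real.log (γ - 1) :=
    sub_pos.mpr (Real.log_lt_log (by linarith) (by linarith))
  have hmaxnn : 0 ≤ max (Real.log γlow)
      (max (Real.log (C ^ 2 * ρ ^ M / (1 - ρ ^ M))) 0) :=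
    le_trans (le_max_right _ _) (le_max_right _ _)
  have hN₀NM : (N₀ : ℝ) ≤ NM := by
    rw [hNM]; nlinarith [div_nonneg hmaxnn hD.le]
  have hN₀N : N₀ < N := by exact_mod_cast hN₀NM.trans_lt hN
  have hN1 : 1 ≤ N := by omega
  have hgeomEq : ∀ K : ℕ, ∑ i ∈ Finset.range K, ρ ^ i = (1 - ρ ^ K) / (1 - ρ) := by
    intro K
    rw [geom_sum_eq hρ1.ne]
    rw [div_eq_div_iff (by linarith) h1ρ.ne']
    ring
  have hgeomle : ∀ K : ℕ, ∑ i ∈ Finset.range K, ρ ^ i ≤ 1 / (1 - ρ) := by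
    intro K
    rw [hgeomEq]
    gcongr
    nlinarith [pow_nonneg hρpos.le K]
  -- abbreviations
  obtain ⟨xs, hxs⟩ : ∃ v : ℕ → Vec n, v = traj f x u := ⟨_, rfl⟩
  obtain ⟨L, hL⟩ : ∃ v : ℕ → ℝ, v = fun j => ℓ (xs j) (u j) := ⟨_, rfl⟩
  obtain ⟨φ, hφ⟩ : ∃ v : ℕ → Vec n, v = phiX f κ (xs N) := ⟨_, rfl⟩
  obtain ⟨lk, hlk⟩ : ∃ v : Vec n → ℝ, v = fun y => ℓ y (κ y) := ⟨_, rfl⟩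
  obtain ⟨T, hT⟩ : ∃ v : ℝ, v = ∑ k ∈ Finset.range M, lk (φ k) := ⟨_, rfl⟩
  obtain ⟨S, hS⟩ : ∃ v : ℝ, v = ∑ j ∈ Finset.range N, L j := ⟨_, rfl⟩
  obtain ⟨Vr, hVr⟩ : ∃ v : ℕ → ℝ, v = fun k => (∑ j ∈ Finset.Ico k N, L j) + T := ⟨_, rfl⟩
  have hLnn : ∀ j, 0 ≤ L j := fun j => by rw [hL]; exact hℓ0 _ _
  have hlknn : ∀ y, 0 ≤ lk y := fun y => by rw [hlk]; exact hℓ0 _ _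
  have hTnn : 0 ≤ T := hT ▸ Finset.sum_nonneg fun k _ => hlknn _
  have hSnn : 0 ≤ S := hS ▸ Finset.sum_nonneg fun j _ => hLnn _
  have hVrnn : ∀ k, 0 ≤ Vr k := fun k => by
    rw [hVr]
    exact add_nonneg (Finset.sum_nonneg fun j _ => hLnn _) hTnn
  -- the optimal cost is finite, extract the tail condition
  have hfin : Jcost f κ ℓ Z N M x u ≠ ⊤ := by
    rw [← hmin]
    exact ne_top_of_le_ne_top ENNReal.ofReal_ne_top hble
  have htailc : ∀ k < M, (phiX f κ (xs N) k, κ (phiX f κ (xs N) k)) ∈ Z := by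
    by_contra hcon
    rw [hxs] at hcon
    apply hfin
    unfold Jcost Vtail
    rw [if_neg hcon]; simp
  have hVtail : Vtail f κ ℓ Z M (xs N) = ENNReal.ofReal T := by
    unfold Vtail
    rw [if_pos htailc, hT, hφ, hlk]
  have hVx : Vmpc f κ ℓ Z Uset N M x = ENNReal.ofReal (S + T) := by
    have h1 : ∑ k ∈ Finset.range N, ℓ (xs k) (u k) = S := by rw [hS, hL]
    rw [hmin]
    unfold Jcost
    rw [← hxs, h1, hVtail, ← ENNReal.ofReal_add hSnn hTnn]
  have hST : S + T ≤ Vbar := by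
    rw [hVx] at hble
    exact (ENNReal.ofReal_le_ofReal_iff hVbar.le).mp hble
  have hVr0 : Vr 0 = S + T := by
    simp only [hVr, hS, Finset.range_eq_Ico]
  -- recursion for Vr
  have hVrsucc : ∀ k < N, Vr k = L k + Vr (k + 1) := by
    intro k hk
    simp only [hVr]
    rw [Finset.sum_eq_sum_Ico_succ_bot hk]
    ring
  have hVrmono : ∀ k < N, Vr (k + 1) ≤ Vr k := by
    intro k hk
    rw [hVrsucc k hk]
    linarith [hLnn k]
  have hVrle0 : ∀ k, k ≤ N → Vr k ≤ Vr 0 := by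
    intro k
    induction k with
    | zero => intro _; exact le_rfl
    | succ k ih =>
      intro hk
      exact le_trans (hVrmono k (by omega)) (ih (by omega))
  have hlmin_nn : ∀ y : Vec n, 0 ≤ lmin ℓ Uset y := lmin_nonneg ℓ Uset hℓ0
  have hlmin_lk : ∀ y : Vec n, lmin ℓ Uset y ≤ lk y := fun y => by
    simp only [hlk]
    exact lmin_le ℓ Uset hℓ0 y (hκU y)
  have hlmin_L : ∀ k < N, lmin ℓ Uset (xs k) ≤ L k := fun k hk => by
    simp only [hL]
    exact lmin_le ℓ Uset hℓ0 (xs k) (hfeas k hk).1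
  -- the good-step bound via the spliced candidate
  have hgood : ∀ k, k ≤ N → lmin ℓ Uset (xs k) ≤ ε →
      Vr k ≤ γ * lmin ℓ Uset (xs k) := by
    intro k hkN hkε
    have hA2y := hA2' (xs k) hkε
    obtain ⟨w, hw⟩ : ∃ v : ℕ → Vec m, v = splice f κ x u k := ⟨_, rfl⟩
    have hwlt : ∀ j < k, w j = u j := by
      intro j hj
      simp [hw, splice, hj]
    have htrlt : ∀ j ≤ k, traj f x w j = traj f x u j := fun j hj => by
      rw [hw]
      exact traj_splice_le f κ x u hj
    have htrge : ∀ i : ℕ, traj f x w (k + i) = phiX f κ (xs k) i := by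
      intro i
      rw [hw, traj_splice_ge f κ x u k i, hxs]
    have hwge : ∀ j, k ≤ j → w j = κ (phiX f κ (xs k) (j - k)) := by
      intro j hj
      rw [hw, splice_val_ge f κ x u hj, hxs]
    have hfw : Feasible f Z Uset N x w := by
      intro j hj
      by_cases hjk : j < k
      · rw [hwlt j hjk, htrlt j hjk.le]
        exact hfeas j hj
      · push_neg at hjk
        obtain ⟨i, rfl⟩ : ∃ i, j = k + i := ⟨j - k, by omega⟩
        rw [hwge (k + i) (by omega), htrge i, Nat.add_sub_cancel_left]
        exact ⟨hκU _, (hA2y i).2⟩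
    have hwN : traj f x w N = phiX f κ (xs k) (N - k) := by
      have := htrge (N - k)
      rwa [Nat.add_sub_cancel' hkN] at this
    have hwtailc : ∀ i < M,
        (phiX f κ (traj f x w N) i, κ (phiX f κ (traj f x w N) i)) ∈ Z := by
      intro i _
      rw [hwN, ← phiX_add]
      exact (hA2y _).2
    have hVtw : Vtail f κ ℓ Z M (traj f x w N) =
        ENNReal.ofReal (∑ i ∈ Finset.range M, lk (phiX f κ (xs k) (N - k + i))) := by
      unfold Vtail
      rw [if_pos hwtailc]
      congr 1
      apply Finset.sum_congr rfl
      intro i _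
      rw [hwN, ← phiX_add, hlk]
    have hwstage : ∑ j ∈ Finset.range N, ℓ (traj f x w j) (w j) =
        (∑ j ∈ Finset.range k, L j) +
          ∑ i ∈ Finset.range (N - k), lk (phiX f κ (xs k) i) := by
      rw [← Finset.sum_range_add_sum_Ico _ hkN, Finset.sum_Ico_eq_sum_range]
      congr 1
      · apply Finset.sum_congr rfl
        intro j hj
        have hj' := Finset.mem_range.mp hj
        rw [hwlt j hj', htrlt j hj'.le, hL, hxs]
      · apply Finset.sum_congr rfl
        intro i _
        rw [htrge i, hwge (k + i) (by omega), Nat.add_sub_cancel_left, hlk]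
    have hJw : Jcost f κ ℓ Z N M x w =
        ENNReal.ofReal ((∑ j ∈ Finset.range k, L j) +
          ∑ i ∈ Finset.range (N - k + M), lk (phiX f κ (xs k) i)) := by
      have hcomb : ∑ i ∈ Finset.range (N - k + M), lk (phiX f κ (xs k) i) =
          (∑ i ∈ Finset.range (N - k), lk (phiX f κ (xs k) i)) +
            ∑ i ∈ Finset.range M, lk (phiX f κ (xs k) (N - k + i)) := by
        rw [← Finset.sum_range_add_sum_Ico _ (Nat.le_add_right (N - k) M),
          Finset.sum_Ico_eq_sum_range]
        have hMM : N - k + M - (N - k) = M := by omega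
        rw [hMM]
      unfold Jcost
      rw [hVtw, hwstage, ← ENNReal.ofReal_add
        (add_nonneg (Finset.sum_nonneg fun j _ => hLnn _)
          (Finset.sum_nonneg fun i _ => hlknn _))
        (Finset.sum_nonneg fun i _ => hlknn _)]
      congr 1
      rw [hcomb]
      ring
    have hQ : ∑ i ∈ Finset.range (N - k + M), lk (phiX f κ (xs k) i) ≤
        γ * lmin ℓ Uset (xs k) := by
      calc ∑ i ∈ Finset.range (N - k + M), lk (phiX f κ (xs k) i)
          ≤ ∑ i ∈ Finset.range (N - k + M), C * ρ ^ i * lmin ℓ Uset (xs k) := by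
            apply Finset.sum_le_sum
            intro i _
            simp only [hlk]
            exact (hA2y i).1
        _ = (∑ i ∈ Finset.range (N - k + M), ρ ^ i) * (C * lmin ℓ Uset (xs k)) := by
            rw [Finset.sum_mul]
            apply Finset.sum_congr rfl
            intro i _
            ring
        _ ≤ (1 / (1 - ρ)) * (C * lmin ℓ Uset (xs k)) := by
            exact mul_le_mul_of_nonneg_right (hgeomle _)
              (mul_nonneg hCpos.le (hlmin_nn _))
        _ = γ * lmin ℓ Uset (xs k) := by
            rw [← hγC]
            field_simp
    have hle : Vmpc f κ ℓ Z Uset N M x ≤ Jcost f κ ℓ Z N M x w := by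
      unfold Vmpc
      exact iInf_le_of_le w (by rw [iInf_pos hfw])
    rw [hVx, hJw] at hle
    have hreal : S + T ≤ (∑ j ∈ Finset.range k, L j) +
        ∑ i ∈ Finset.range (N - k + M), lk (phiX f κ (xs k) i) := by
      refine (ENNReal.ofReal_le_ofReal_iff ?_).mp hle
      exact add_nonneg (Finset.sum_nonneg fun j _ => hLnn _)
        (Finset.sum_nonneg fun i _ => hlknn _)
    have hsplit : S + T = (∑ j ∈ Finset.range k, L j) + Vr k := by
      simp only [hVr, hS]
      rw [Finset.range_eq_Ico, ← Finset.sum_Ico_consecutive _ (Nat.zero_le k) hkN,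
        ← Finset.range_eq_Ico]
      ring
    rw [hsplit] at hreal
    have : Vr k ≤ ∑ i ∈ Finset.range (N - k + M), lk (phiX f κ (xs k) i) := by
      linarith
    linarith
  -- contraction step
  have hcontr : ∀ k < N, Vr k ≤ γ * ε → Vr (k + 1) ≤ ργ * Vr k := by
    intro k hk hVk
    have hLk : Vr k / γ ≤ L k := by
      by_cases hcase : lmin ℓ Uset (xs k) ≤ ε
      · have h1 := hgood k hk.le hcase
        have h2 := hlmin_L k hk
        rw [div_le_iff₀ hγpos]
        calc Vr k ≤ γ * lmin ℓ Uset (xs k) := h1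
          _ ≤ γ * L k := by
            exact mul_le_mul_of_nonneg_left h2 hγpos.le
          _ = L k * γ := by ring
      · push_neg at hcase
        have h2 := hlmin_L k hk
        have h3 : Vr k / γ ≤ ε := by
          rw [div_le_iff₀ hγpos]; linarith
        linarith
    have h4 : Vr (k + 1) = Vr k - L k := by
      have := hVrsucc k hk; linarith
    have h5 : ργ * Vr k = Vr k - Vr k / γ := by
      rw [hργ]; field_simp
    rw [h4, h5]
    linarith
  -- while the cost is large it drops by ε each step
  have hdropstep : ∀ k < N, γ * ε < Vr k → Vr (k + 1) ≤ Vr k - ε := by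
    intro k hk hbig
    have hεL : ε ≤ L k := by
      by_cases hcase : lmin ℓ Uset (xs k) ≤ ε
      · have h1 := hgood k hk.le hcase
        have h2 := hlmin_L k hk
        have h3 : γ * ε < γ * lmin ℓ Uset (xs k) := lt_of_lt_of_le hbig h1
        have h4 : ε < lmin ℓ Uset (xs k) := (mul_lt_mul_iff_right₀ hγpos).mp h3
        linarith
      · push_neg at hcase
        have h2 := hlmin_L k hk
        linarith
    have h4 : Vr (k + 1) = Vr k - L k := by
      have := hVrsucc k hk; linarith
    linarith
  have hdrop : ∀ k, k ≤ N → Vr k ≤ max (γ * ε) (Vr 0 - k * ε) := by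
    intro k
    induction k with
    | zero => intro _; simp
    | succ k ih =>
      intro hk
      have hkN : k < N := by omega
      have ihk := ih (by omega)
      by_cases hVk : Vr k ≤ γ * ε
      · exact le_trans (le_trans (hVrmono k hkN) hVk) (le_max_left _ _)
      · push_neg at hVk
        have h1 := hdropstep k hkN hVk
        have h2 := le_max_left (γ * ε) (Vr 0 - (k + 1 : ℕ) * ε)
        have h3 := le_max_right (γ * ε) (Vr 0 - (k + 1 : ℕ) * ε)
        rcases le_total (Vr 0 - k * ε) (γ * ε) with hc | hc
        · rw [max_eq_left hc] at ihk
          linarith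
        · rw [max_eq_right hc] at ihk
          have : Vr (k + 1) ≤ Vr 0 - (k + 1 : ℕ) * ε := by
            push_cast
            push_cast at ihk
            linarith
          linarith
  have hVrN₀γ : Vr N₀ ≤ γ * ε := by
    have h1 := hdrop N₀ hN₀N.le
    have hceil : max 0 ((Vbar - γ * ε) / ε) ≤ (N₀ : ℝ) := hN₀ ▸ Nat.le_ceil _
    have h2 : (Vbar - γ * ε) / ε ≤ (N₀ : ℝ) := le_trans (le_max_right _ _) hceil
    have h3 : Vbar - γ * ε ≤ (N₀ : ℝ) * ε := by
      rw [div_le_iff₀ hε] at h2; linarith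
    have h4 : Vr 0 - (N₀ : ℕ) * ε ≤ γ * ε := by
      push_cast
      linarith [hVr0, hST]
    exact le_trans h1 (max_le le_rfl h4)
  have hVrN₀ : Vr N₀ ≤ γlow * ε := by
    have h2 : Vr N₀ ≤ Vbar := by
      have := hVrle0 N₀ hN₀N.le
      linarith [hVr0, hST]
    rw [hγlow, min_mul_of_nonneg _ _ hε.le]
    refine le_min hVrN₀γ ?_
    rw [div_mul_cancel₀ _ hε.ne']
    exact h2
  -- geometric contraction after N₀
  have hchainfrom : ∀ (j : ℕ) (B : ℝ), Vr j ≤ B → B ≤ γ * ε →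
      ∀ i, j + i ≤ N → Vr (j + i) ≤ ργ ^ i * B := by
    intro j B hjB hBγ i
    induction i with
    | zero => intro _; simpa using hjB
    | succ i ih =>
      intro hi
      have hii := ih (by omega)
      have hb : Vr (j + i) ≤ γ * ε := by
        have hργi : ργ ^ i ≤ 1 := pow_le_one₀ hργ0 hργ1.le
        have hBnn : 0 ≤ B := le_trans (hVrnn j) hjB
        have h2 := mul_le_mul_of_nonneg_right hργi hBnn
        calc Vr (j + i) ≤ ργ ^ i * B := hii
          _ ≤ 1 * B := h2
          _ = B := one_mul B
          _ ≤ γ * ε := hBγ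
      have hc := hcontr (j + i) (by omega) hb
      have : Vr (j + i + 1) ≤ ργ * (ργ ^ i * B) :=
        le_trans hc (mul_le_mul_of_nonneg_left hii hργ0)
      rw [show j + (i + 1) = j + i + 1 from rfl]
      calc Vr (j + i + 1) ≤ ργ * (ργ ^ i * B) := this
        _ = ργ ^ (i + 1) * B := by ring
  have hVN1 : Vr N ≤ ργ ^ (N - N₀) * (γlow * ε) := by
    have := hchainfrom N₀ (γlow * ε) hVrN₀
      (mul_le_mul_of_nonneg_right hγlowγ hε.le) (N - N₀) (by omega)
    rwa [Nat.add_sub_cancel' hN₀N.le] at this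
  -- ργ^(N-N₀) * γlow ≤ 1, via logarithms
  have hpow1 : ργ ^ (N - N₀) * γlow ≤ 1 := by
    have hργpos : 0 < ργ := by
      rw [hργ]; exact div_pos (by linarith) hγpos
    rcases le_or_gt γlow 1 with hg | hg
    · have h1 : ργ ^ (N - N₀) ≤ 1 := pow_le_one₀ hργ0 hργ1.le
      calc ργ ^ (N - N₀) * γlow ≤ 1 * 1 :=
            mul_le_mul h1 hg hγlowpos.le one_pos.le
        _ = 1 := by ring
    · have hlogγlow : Real.log γlow / (Real.log γ - Real.log (γ - 1)) <
          ((N - N₀ : ℕ) : ℝ) := by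
        have h2 : Real.log γlow ≤ max (Real.log γlow)
            (max (Real.log (C ^ 2 * ρ ^ M / (1 - ρ ^ M))) 0) := le_max_left _ _
        have h3 : (N₀ : ℝ) + Real.log γlow / (Real.log γ - Real.log (γ - 1)) ≤ NM := by
          rw [hNM]
          have h4 := (div_le_div_iff_of_pos_right hD).mpr h2
          linarith
        have h4 : ((N - N₀ : ℕ) : ℝ) = (N : ℝ) - (N₀ : ℝ) := by
          push_cast [Nat.cast_sub hN₀N.le]
          ring
        rw [h4]
        linarith
      have hlogργ : Real.log ργ = Real.log (γ - 1) - Real.log γ := by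
        rw [hργ, Real.log_div (by linarith) (by linarith)]
      have h5 : Real.log γlow < ((N - N₀ : ℕ) : ℝ) *
          (Real.log γ - Real.log (γ - 1)) := by
        rw [div_lt_iff₀ hD] at hlogγlow
        linarith
      have h6 : Real.log (ργ ^ (N - N₀) * γlow) < 0 := by
        rw [Real.log_mul (by positivity) hγlowpos.ne', Real.log_pow, hlogργ]
        push_cast
        nlinarith
      have h7 : 0 < ργ ^ (N - N₀) * γlow := by positivity
      exact le_of_lt ((Real.log_neg_iff h7).mp h6)
  have hVNε : Vr N ≤ ε := by
    calc Vr N ≤ ργ ^ (N - N₀) * (γlow * ε) := hVN1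
      _ = (ργ ^ (N - N₀) * γlow) * ε := by ring
      _ ≤ 1 * ε := mul_le_mul_of_nonneg_right hpow1 hε.le
      _ = ε := one_mul ε
  -- bound Vr N by the first stage cost
  have hVNL0 : Vr N ≤ ργ ^ (N - N₀) * γ * L 0 := by
    rcases le_or_gt (lmin ℓ Uset (xs 0)) ε with h0 | h0
    · have hg0 : Vr 0 ≤ γ * lmin ℓ Uset (xs 0) := hgood 0 (by omega) h0
      have hγε0 : Vr 0 ≤ γ * ε :=
        le_trans hg0 (mul_le_mul_of_nonneg_left h0 hγpos.le)
      have hchain0 := hchainfrom 0 (Vr 0) le_rfl hγε0 N (by omega)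
      rw [Nat.zero_add] at hchain0
      have hργN : ργ ^ N ≤ ργ ^ (N - N₀) :=
        pow_le_pow_of_le_one hργ0 hργ1.le (by omega)
      have hL00 : Vr 0 ≤ γ * L 0 :=
        le_trans hg0 (mul_le_mul_of_nonneg_left (hlmin_L 0 (by omega)) hγpos.le)
      calc Vr N ≤ ργ ^ N * Vr 0 := hchain0
        _ ≤ ργ ^ (N - N₀) * Vr 0 :=
            mul_le_mul_of_nonneg_right hργN (hVrnn 0)
        _ ≤ ργ ^ (N - N₀) * (γ * L 0) :=
            mul_le_mul_of_nonneg_left hL00 (by positivity)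
        _ = ργ ^ (N - N₀) * γ * L 0 := by ring
    · have hεL0 : ε ≤ L 0 := le_trans h0.le (hlmin_L 0 (by omega))
      calc Vr N ≤ ργ ^ (N - N₀) * (γlow * ε) := hVN1
        _ ≤ ργ ^ (N - N₀) * (γ * L 0) := by
            apply mul_le_mul_of_nonneg_left ?_ (by positivity)
            exact mul_le_mul hγlowγ hεL0 hε.le hγpos.le
        _ = ργ ^ (N - N₀) * γ * L 0 := by ring
  -- the terminal tail is small
  have hTVrN : Vr N = T := by
    rw [hVr]
    simp
  have hlk_le_T : ∀ k < M, lk (φ k) ≤ T := by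
    intro k hk
    rw [hT]
    exact Finset.single_le_sum (fun i _ => hlknn (φ i)) (Finset.mem_range.mpr hk)
  have hφ0 : φ 0 = xs N := by rw [hφ]; rfl
  have hlminN : lmin ℓ Uset (xs N) ≤ ε := by
    have h1 : lmin ℓ Uset (xs N) ≤ lk (xs N) := hlmin_lk _
    have h2 : lk (φ 0) ≤ T := hlk_le_T 0 (by omega)
    rw [hφ0] at h2
    linarith [hTVrN ▸ hVNε]
  have hA2N := hA2' (xs N) hlminN
  have hφkε : ∀ k < M, lmin ℓ Uset (φ k) ≤ ε := by
    intro k hk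
    have h1 : lmin ℓ Uset (φ k) ≤ lk (φ k) := hlmin_lk _
    have h2 : lk (φ k) ≤ T := hlk_le_T k hk
    have h3 : T ≤ ε := hTVrN ▸ hVNε
    linarith
  have hφadd : ∀ k i : ℕ, phiX f κ (φ k) i = φ (k + i) := by
    intro k i
    rw [hφ, ← phiX_add]
  have hkeysum : lk (φ M) * ((1 - ρ ^ M) / (1 - ρ)) ≤ C * ρ ^ M * T := by
    have h1 : ∀ k < M, ρ ^ k * lk (φ M) ≤ C * ρ ^ M * lk (φ k) := by
      intro k hk
      have hA2k := hA2' (φ k) (hφkε k hk)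
      have h2 := (hA2k (M - k)).1
      rw [hφadd k (M - k), Nat.add_sub_cancel' hk.le] at h2
      have h3 : lmin ℓ Uset (φ k) ≤ lk (φ k) := hlmin_lk _
      have h4 : lk (φ M) ≤ C * ρ ^ (M - k) * lk (φ k) := by
        simp only [hlk] at h2 ⊢
        calc ℓ (φ M) (κ (φ M)) ≤ C * ρ ^ (M - k) * lmin ℓ Uset (φ k) := h2
          _ ≤ C * ρ ^ (M - k) * ((fun y => ℓ y (κ y)) (φ k)) := by
              apply mul_le_mul_of_nonneg_left ?_ (by positivity)
              simpa [hlk] using h3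
      have h5 := mul_le_mul_of_nonneg_left h4 (pow_nonneg hρpos.le k)
      calc ρ ^ k * lk (φ M) ≤ ρ ^ k * (C * ρ ^ (M - k) * lk (φ k)) := h5
        _ = C * (ρ ^ k * ρ ^ (M - k)) * lk (φ k) := by ring
        _ = C * ρ ^ M * lk (φ k) := by
            rw [← pow_add, Nat.add_sub_cancel' hk.le]
    calc lk (φ M) * ((1 - ρ ^ M) / (1 - ρ))
        = ∑ k ∈ Finset.range M, ρ ^ k * lk (φ M) := by
          rw [← Finset.sum_mul, hgeomEq]
          ring
      _ ≤ ∑ k ∈ Finset.range M, C * ρ ^ M * lk (φ k) :=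
          Finset.sum_le_sum fun k hk => h1 k (Finset.mem_range.mp hk)
      _ = C * ρ ^ M * T := by
          rw [hT, Finset.mul_sum]
  have hfinalb : lk (φ M) ≤ (1 - εNM) * L 0 := by
    have hq : 0 < (1 - ρ ^ M) / (1 - ρ) := div_pos hρM0 h1ρ
    have h1 : lk (φ M) ≤ (C * ρ ^ M * T) / ((1 - ρ ^ M) / (1 - ρ)) :=
      (le_div_iff₀ hq).mpr hkeysum
    have h2 : C * ρ ^ M * T ≤ C * ρ ^ M * (ργ ^ (N - N₀) * γ * L 0) := by
      apply mul_le_mul_of_nonneg_left ?_ (by positivity)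
      rw [← hTVrN]
      exact hVNL0
    have h3 : lk (φ M) ≤ (C * ρ ^ M * (ργ ^ (N - N₀) * γ * L 0)) /
        ((1 - ρ ^ M) / (1 - ρ)) :=
      le_trans h1 ((div_le_div_iff_of_pos_right hq).mpr h2)
    have h4 : (C * ρ ^ M * (ργ ^ (N - N₀) * γ * L 0)) / ((1 - ρ ^ M) / (1 - ρ)) =
        (1 - εNM) * L 0 := by
      rw [hεNM]
      have hC2 : C ^ 2 = C * (γ * (1 - ρ)) := by rw [hγC]; ring
      rw [hC2]
      field_simp
      ring
    exact h4 ▸ h3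
  -- the shifted candidate from the successor state
  obtain ⟨n', hNn⟩ : ∃ n', N = n' + 1 := ⟨N - 1, by omega⟩
  obtain ⟨us, hus⟩ : ∃ v : ℕ → Vec m, v = fun j => u (j + 1) := ⟨_, rfl⟩
  have htr : ∀ j, traj f (f x (u 0)) us j = xs (j + 1) := by
    intro j
    rw [hus, hxs]
    exact traj_shift f x u j
  have htrn' : traj f (f x (u 0)) us n' = xs N := by rw [htr, ← hNn]
  obtain ⟨w, hw⟩ : ∃ v : ℕ → Vec m, v = splice f κ (f x (u 0)) us n' := ⟨_, rfl⟩
  have hwlt : ∀ j < n', w j = us j := by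
    intro j hj
    simp [hw, splice, hj]
  have htrlt : ∀ j ≤ n', traj f (f x (u 0)) w j = traj f (f x (u 0)) us j := by
    intro j hj
    rw [hw]
    exact traj_splice_le f κ _ us hj
  have htrge : ∀ i, traj f (f x (u 0)) w (n' + i) = φ i := by
    intro i
    rw [hw, traj_splice_ge f κ _ us n' i, htrn', ← hφ]
  have hwn' : w n' = κ (xs N) := by
    rw [hw, splice_val_ge f κ _ us le_rfl, Nat.sub_self, htrn']
    rfl
  have hfw : Feasible f Z Uset N (f x (u 0)) w := by
    intro j hj
    by_cases hjn : j < n'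
    · rw [hwlt j hjn, htrlt j hjn.le, htr j, hxs]
      simp only [hus]
      exact hfeas (j + 1) (by omega)
    · have hj' : j = n' := by omega
      rw [hj', hwn', htrlt n' le_rfl, htrn']
      exact ⟨hκU _, (hA2N 0).2⟩
  have hL0S : L 0 ≤ S :=
    hS ▸ Finset.single_le_sum (fun i _ => hLnn i) (Finset.mem_range.mpr (by omega))
  have hstage : ∑ j ∈ Finset.range N, ℓ (traj f (f x (u 0)) w j) (w j) =
      (S - L 0) + lk (φ 0) := by
    rw [hNn, Finset.sum_range_succ]
    have h1 : ∑ j ∈ Finset.range n', ℓ (traj f (f x (u 0)) w j) (w j) =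
        ∑ j ∈ Finset.range n', L (j + 1) := by
      apply Finset.sum_congr rfl
      intro j hj
      have hj' := Finset.mem_range.mp hj
      rw [hwlt j hj', htrlt j hj'.le, htr j]
      simp [hus, hL]
    have h2 : ℓ (traj f (f x (u 0)) w n') (w n') = lk (φ 0) := by
      rw [htrlt n' le_rfl, htrn', hwn', hφ0]
      simp [hlk]
    have h3 : ∑ j ∈ Finset.range n', L (j + 1) = S - L 0 := by
      have h4 : S = (∑ j ∈ Finset.range n', L (j + 1)) + L 0 := by
        rw [hS, hNn, Finset.sum_range_succ']
      linarith
    rw [h1, h2, h3]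
  have htrN : traj f (f x (u 0)) w N = φ 1 := by
    rw [hNn]
    exact htrge 1
  have htailc2 : ∀ i < M, (phiX f κ (traj f (f x (u 0)) w N) i,
      κ (phiX f κ (traj f (f x (u 0)) w N) i)) ∈ Z := by
    intro i _
    rw [htrN, hφadd 1 i, hφ]
    exact (hA2N (1 + i)).2
  have hVtw2 : Vtail f κ ℓ Z M (traj f (f x (u 0)) w N) =
      ENNReal.ofReal (∑ i ∈ Finset.range M, lk (φ (1 + i))) := by
    unfold Vtail
    rw [if_pos htailc2]
    congr 1
    apply Finset.sum_congr rfl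
    intro i _
    rw [htrN, hφadd 1 i, hlk]
  have hsum2 : ∑ i ∈ Finset.range M, lk (φ (1 + i)) = T - lk (φ 0) + lk (φ M) := by
    obtain ⟨m', hMm⟩ : ∃ m', M = m' + 1 := ⟨M - 1, by omega⟩
    have hTs : T = (∑ i ∈ Finset.range m', lk (φ (i + 1))) + lk (φ 0) := by
      rw [hT, hMm, Finset.sum_range_succ']
    have hcongr : ∑ i ∈ Finset.range m', lk (φ (1 + i)) =
        ∑ i ∈ Finset.range m', lk (φ (i + 1)) := by
      apply Finset.sum_congr rfl
      intro i _
      rw [Nat.add_comm]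
    rw [hMm, Finset.sum_range_succ, hcongr, hTs, Nat.add_comm 1 m']
    ring
  have hJw2 : Jcost f κ ℓ Z N M (f x (u 0)) w =
      ENNReal.ofReal (((S - L 0) + lk (φ 0)) + (T - lk (φ 0) + lk (φ M))) := by
    unfold Jcost
    rw [hVtw2, hstage, hsum2, ← ENNReal.ofReal_add ?_ ?_]
    · exact add_nonneg (by linarith [hlknn (φ 0)]) (hlknn (φ 0))
    · have := hlk_le_T 0 (by omega)
      have := hlknn (φ M)
      linarith
  have hVxple : Vmpc f κ ℓ Z Uset N M (f x (u 0)) ≤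
      ENNReal.ofReal ((S + T) - εNM * L 0) := by
    have h1 : Vmpc f κ ℓ Z Uset N M (f x (u 0)) ≤ Jcost f κ ℓ Z N M (f x (u 0)) w := by
      unfold Vmpc
      exact iInf_le_of_le w (by rw [iInf_pos hfw])
    rw [hJw2] at h1
    refine le_trans h1 (ENNReal.ofReal_le_ofReal ?_)
    have h2 := hfinalb
    linarith
  have hεNM1 : εNM ≤ 1 := by
    rw [hεNM]
    have h1 : 0 ≤ C ^ 2 * ργ ^ (N - N₀) * ρ ^ M / (1 - ρ ^ M) :=
      div_nonneg (mul_nonneg (mul_nonneg (sq_nonneg C) (pow_nonneg hργ0 _))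
        (pow_nonneg hρpos.le _)) hρM0.le
    linarith
  have hεL0nn : 0 ≤ εNM * L 0 := mul_nonneg hεpos.le (hLnn 0)
  have hfsub : 0 ≤ (S + T) - εNM * L 0 := by
    have h1 : εNM * L 0 ≤ 1 * L 0 := mul_le_mul_of_nonneg_right hεNM1 (hLnn 0)
    linarith
  have hgoal : ENNReal.ofReal ((S + T) - εNM * L 0) + ENNReal.ofReal (εNM * L 0) =
      ENNReal.ofReal (S + T) := by
    rw [← ENNReal.ofReal_add hfsub hεL0nn]
    ring_nf
  have hLxu : L 0 = ℓ x (u 0) := by rw [hL, hxs]; rfl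
  calc Vmpc f κ ℓ Z Uset N M (f x (u 0)) + ENNReal.ofReal (εNM * ℓ x (u 0))
      = Vmpc f κ ℓ Z Uset N M (f x (u 0)) + ENNReal.ofReal (εNM * L 0) := by
        rw [hLxu]
    _ ≤ ENNReal.ofReal ((S + T) - εNM * L 0) + ENNReal.ofReal (εNM * L 0) :=
        add_le_add_left hVxple _
    _ = ENNReal.ofReal (S + T) := hgoal
    _ = Vmpc f κ ℓ Z Uset N M x := hVx.symm
/-- Theorem 1, closed-loop performance bound: under Assumptions 1 and 2
with `ρ > 0`, `γ = C/(1-ρ) > 1` and `N > N_M` (so `ε_{N,M} > 0`), every closed loop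
generated by minimizing input sequences from `x₀` with `V_{N,M}(x₀) ≤ V̄` satisfies
`Σ_{k=0}^∞ ℓ(x(k), u(k)) ≤ V_{N,M}(x₀)/ε_{N,M}`. -/
theorem closed_loop_performance {n m : ℕ}
    (f : Vec n → Vec m → Vec n) (κ : Vec n → Vec m) (ℓ : Vec n → Vec m → ℝ)
    (Z : Set (Vec n × Vec m)) (Uset : Set (Vec m)) (ρ C ε : ℝ)
    (hf : Continuous fun p : Vec n × Vec m => f p.1 p.2) (hf0 : f 0 0 = 0)
    (hℓ : Continuous fun p : Vec n × Vec m => ℓ p.1 p.2) (hℓ0 : ∀ x u, 0 ≤ ℓ x u)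
    (hZ0 : ((0 : Vec n), (0 : Vec m)) ∈ interior Z) (hU : IsCompact Uset)
    (hκ : Continuous κ) (hκU : ∀ x, κ x ∈ Uset)
    (αlow αup : ℝ → ℝ) (hαlow : IsKInfty αlow) (hαup : IsKInfty αup)
    (hA1 : ∀ x : Vec n, αlow ‖x‖ ≤ lmin ℓ Uset x ∧ lmin ℓ Uset x ≤ αup ‖x‖)
    (hℓ00 : ℓ 0 0 = 0)
    (hA2 : Assumption2 f κ ℓ Z Uset ρ C ε) (hρpos : 0 < ρ)
    (Vbar γ ργ γlow NM : ℝ) (hVbar : 0 < Vbar) (hγ : γ = C / (1 - ρ)) (hγ1 : 1 < γ)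
    (hργ : ργ = (γ - 1) / γ) (hγlow : γlow = min γ (Vbar / ε))
    (N₀ : ℕ) (hN₀ : N₀ = ⌈max 0 ((Vbar - γ * ε) / ε)⌉₊)
    (M : ℕ) (hM : 1 ≤ M)
    (hNM : NM = N₀ + max (Real.log γlow)
        (max (Real.log (C ^ 2 * ρ ^ M / (1 - ρ ^ M))) 0) /
        (Real.log γ - Real.log (γ - 1)))
    (N : ℕ) (hN : NM < N) (εNM : ℝ)
    (hεNM : εNM = 1 - C ^ 2 * ργ ^ (N - N₀) * ρ ^ M / (1 - ρ ^ M)) (hεpos : 0 < εNM)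
    (x₀ : Vec n) (hx₀ : Vmpc f κ ℓ Z Uset N M x₀ ≤ ENNReal.ofReal Vbar)
    (xcl : ℕ → Vec n) (ustar : ℕ → ℕ → Vec m) (hinit : xcl 0 = x₀)
    (hopt : ∀ t, IsMinimizer f κ ℓ Z Uset N M (xcl t) (ustar t))
    (hstep : ∀ t, xcl (t + 1) = f (xcl t) (ustar t 0)) :
    ∑' k : ℕ, ENNReal.ofReal (ℓ (xcl k) (ustar k 0)) ≤
      Vmpc f κ ℓ Z Uset N M x₀ / ENNReal.ofReal εNM := by
  have hkey : ∀ t, Vmpc f κ ℓ Z Uset N M (xcl t) ≤ ENNReal.ofReal Vbar →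
      Vmpc f κ ℓ Z Uset N M (xcl (t + 1)) +
        ENNReal.ofReal (εNM * ℓ (xcl t) (ustar t 0)) ≤
          Vmpc f κ ℓ Z Uset N M (xcl t) := by
    intro t hble
    have h := key_decrease f κ ℓ Z Uset ρ C ε hℓ0 hκU hA2 hρpos Vbar γ ργ γlow NM
      hVbar hγ hγ1 hργ hγlow N₀ hN₀ M hM hNM N hN εNM hεNM hεpos (xcl t) (ustar t)
      (hopt t).1 (hopt t).2 hble
    rwa [← hstep t] at h
  have hbar : ∀ t, Vmpc f κ ℓ Z Uset N M (xcl t) ≤ ENNReal.ofReal Vbar := by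
    intro t
    induction t with
    | zero => rw [hinit]; exact hx₀
    | succ t ih =>
      refine le_trans (le_trans le_self_add (hkey t ih)) ih
  have hsum : ∀ K : ℕ,
      (∑ t ∈ Finset.range K, ENNReal.ofReal (εNM * ℓ (xcl t) (ustar t 0))) +
        Vmpc f κ ℓ Z Uset N M (xcl K) ≤ Vmpc f κ ℓ Z Uset N M x₀ := by
    intro K
    induction K with
    | zero => rw [hinit]; simp
    | succ K ih =>
      rw [Finset.sum_range_succ]
      calc (∑ t ∈ Finset.range K, ENNReal.ofReal (εNM * ℓ (xcl t) (ustar t 0))) +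
            ENNReal.ofReal (εNM * ℓ (xcl K) (ustar K 0)) +
            Vmpc f κ ℓ Z Uset N M (xcl (K + 1))
          = (∑ t ∈ Finset.range K, ENNReal.ofReal (εNM * ℓ (xcl t) (ustar t 0))) +
            (Vmpc f κ ℓ Z Uset N M (xcl (K + 1)) +
              ENNReal.ofReal (εNM * ℓ (xcl K) (ustar K 0))) := by
            rw [add_assoc, add_comm (ENNReal.ofReal _)]
        _ ≤ (∑ t ∈ Finset.range K, ENNReal.ofReal (εNM * ℓ (xcl t) (ustar t 0))) +
            Vmpc f κ ℓ Z Uset N M (xcl K) := add_le_add_right (hkey K (hbar K)) _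
        _ ≤ Vmpc f κ ℓ Z Uset N M x₀ := ih
  have h1 : ∀ K : ℕ,
      (∑ t ∈ Finset.range K, ENNReal.ofReal εNM * ENNReal.ofReal (ℓ (xcl t) (ustar t 0)))
        ≤ Vmpc f κ ℓ Z Uset N M x₀ := by
    intro K
    refine le_trans ?_ (le_trans le_self_add (hsum K))
    apply le_of_eq
    apply Finset.sum_congr rfl
    intro t _
    rw [← ENNReal.ofReal_mul hεpos.le]
  have h2 : ENNReal.ofReal εNM * ∑' t, ENNReal.ofReal (ℓ (xcl t) (ustar t 0)) ≤
      Vmpc f κ ℓ Z Uset N M x₀ := by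
    rw [← ENNReal.tsum_mul_left, ENNReal.tsum_eq_iSup_sum]
    refine iSup_le fun s => ?_
    obtain ⟨K, hK⟩ := s.exists_nat_subset_range
    refine le_trans (Finset.sum_le_sum_of_subset hK) (h1 K)
  have hb0 : ENNReal.ofReal εNM ≠ 0 := (ENNReal.ofReal_pos.mpr hεpos).ne'
  have hbt : ENNReal.ofReal εNM ≠ ⊤ := ENNReal.ofReal_ne_top
  rw [ENNReal.le_div_iff_mul_le (Or.inl hb0) (Or.inl hbt)]
  rwa [mul_comm]
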